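/- Let X be a finite non-empty set, Ω = X^ℕ, and let f : Ω → ℝ̄ be any extended-real-valued function. Then f is bounded below and is the pointwise limit of some sequence of finitary extended-real variables if and only if f is the pointwise limit of a sequence {f_n}_{n∈ℕ₀} where each f_n is an n-measurable gamble, the sequence is uniformly bounded below, and f_n ≤ sup f for all n ∈ ℕ₀. If moreover inf f is real, then the sequence can be chosen so that additionally inf f ≤ f_n for all n ∈ ℕ₀. -/
import Mathlib


open Filter Topology

/-- A function to the extended reals is bounded below by some real number. -/
def BddBelowF {Y : Type*} (f : Y → EReal) : Prop :=
  ∃ M : ℝ, ∀ y, (M : EReal) ≤ f y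

/-- An upper expectation on the bounded-below extended-real functions on `Y`:
axioms E1 (constants), E2 (subadditivity), E3 (positive/`+∞` homogeneity on
non-negative functions) and E4 (monotonicity). -/
structure IsUpperExpectation {Y : Type*} (E : (Y → EReal) → EReal) : Prop where
  const : ∀ c : ℝ, E (fun _ => (c : EReal)) = (c : EReal)
  subadd : ∀ f g : Y → EReal, BddBelowF f → BddBelowF g →
    E (fun y => f y + g y) ≤ E f + E g
  homog : ∀ lam : EReal, 0 < lam → ∀ f : Y → EReal, BddBelowF f → (∀ y, 0 ≤ f y) →
    E (fun y => lam * f y) = lam * E f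
  mono : ∀ f g : Y → EReal, BddBelowF f → BddBelowF g → (∀ y, f y ≤ g y) → E f ≤ E g

/-- The initial segment `ω^n = (ω_1, …, ω_n)` of a path `ω ∈ X^ℕ`. -/
def seg {X : Type*} (ω : ℕ → X) (n : ℕ) : List X :=
  List.ofFn (fun i : Fin n => ω i)

/-- The cylinder event `Γ(s)` of all paths going through the situation `s`. -/
def cyl {X : Type*} (s : List X) : Set (ℕ → X) :=
  {ω | seg ω s.length = s}

/-- A global variable is `n`-measurable if it only depends on the first `n` states. -/
def NMeas {X α : Type*} (n : ℕ) (f : (ℕ → X) → α) : Prop :=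
  ∀ ω ω' : ℕ → X, seg ω n = seg ω' n → f ω = f ω'

/-- A supermartingale for an imprecise probability tree `Q`: a bounded-below
extended-real process `M` on situations such that `Q_s(M(s·)) ≤ M(s)` everywhere. -/
def IsSupermartingale {X : Type*} (Q : List X → (X → EReal) → EReal)
    (M : List X → EReal) : Prop :=
  (∃ B : ℝ, ∀ s, (B : EReal) ≤ M s) ∧ ∀ s, Q s (fun x => M (s ++ [x])) ≤ M s

/-- The game-theoretic upper expectation `Ē_V(f | s)`. -/
noncomputable def gUE {X : Type*} (Q : List X → (X → EReal) → EReal)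
    (f : (ℕ → X) → EReal) (s : List X) : EReal :=
  sInf { y | ∃ M : List X → EReal, IsSupermartingale Q M ∧
    (∀ ω ∈ cyl s, f ω ≤ Filter.liminf (fun n => M (seg ω n)) Filter.atTop) ∧ M s = y }

/-- Lemma 4: a bounded-below extended-real global variable is a pointwise limit of
finitary variables if and only if it is the pointwise limit of a uniformly
bounded-below sequence of `n`-measurable gambles dominated by `sup f`; and if
`inf f` is real the sequence can moreover be chosen above `inf f`. -/
lemma nmeas_mono' {X α : Type*} {m n : ℕ} (hmn : m ≤ n) {f : (ℕ → X) → α}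
    (hf : NMeas m f) : NMeas n f := by
  intro ω ω' h
  apply hf
  simp only [seg] at h ⊢
  have h' : ∀ i : Fin n, ω i = ω' i := fun i => congrFun (List.ofFn_inj.mp h) i
  exact List.ofFn_inj.mpr (funext fun i => h' ⟨i.1, lt_of_lt_of_le i.2 hmn⟩)

lemma key' {X : Type*} [Nonempty X] (f : (ℕ → X) → EReal) (M : ℝ)
    (hM : ∀ ω, (M : EReal) ≤ f ω)
    (g : ℕ → (ℕ → X) → EReal) (hgm : ∀ n, ∃ m, NMeas m (g n))
    (hgt : ∀ ω, Tendsto (fun n => g n ω) atTop (𝓝 (f ω))) :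
    ∃ fn : ℕ → (ℕ → X) → ℝ,
      (∀ n, NMeas n (fn n)) ∧
      (∀ n, ∃ B : ℝ, ∀ ω, |fn n ω| ≤ B) ∧
      (∀ n ω, M ≤ fn n ω) ∧
      (∀ n ω, ((fn n ω : ℝ) : EReal) ≤ ⨆ ω', f ω') ∧
      (∀ ω, Tendsto (fun n => ((fn n ω : ℝ) : EReal)) atTop (𝓝 (f ω))) := by
  classical
  choose m hm using hgm
  set c : ℕ → ℕ := fun k => (Finset.range (k + 1)).sup m with hc
  have hmc : ∀ k, m k ≤ c k := fun k => Finset.le_sup (by simp)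
  set φ : ℕ → ℕ := fun n => Nat.findGreatest (fun k => c k ≤ n) n with hφ
  have hφ1 : ∀ n, c 0 ≤ n → c (φ n) ≤ n := fun n h0 =>
    Nat.findGreatest_spec (P := fun k => c k ≤ n) (Nat.zero_le n) h0
  have hφtop : Tendsto φ atTop atTop := by
    refine tendsto_atTop.2 fun K => eventually_atTop.2 ⟨max K (c K), fun n hn => ?_⟩
    exact Nat.le_findGreatest (le_trans (le_max_left _ _) hn)
      (le_trans (le_max_right _ _) hn)
  set S := ⨆ ω', f ω' with hS
  have hMS : (M : EReal) ≤ S := (hM (Classical.arbitrary _)).trans (le_iSup f _)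
  have hSbot : S ≠ ⊥ := fun h => by simp [h] at hMS
  set U : ℕ → ℝ := fun n => if S = ⊤ then max M n else S.toReal with hU
  have hStoReal : ∀ (h : S ≠ ⊤), ((S.toReal : ℝ) : EReal) = S := fun h =>
    EReal.coe_toReal h hSbot
  have hMU : ∀ n, M ≤ U n := by
    intro n
    by_cases h : S = ⊤
    · simp only [hU, h, if_true]; exact le_max_left _ _
    · simp only [hU, h, if_false]
      exact EReal.coe_le_coe_iff.mp (by rw [hStoReal h]; exact hMS)
  have hUS : ∀ n, ((U n : ℝ) : EReal) ≤ S := by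
    intro n
    by_cases h : S = ⊤
    · rw [h]; exact le_top
    · simp only [hU, h, if_false]; rw [hStoReal h]
  have hUt : Tendsto (fun n => ((U n : ℝ) : EReal)) atTop (𝓝 S) := by
    by_cases h : S = ⊤
    · simp only [hU, h, if_true]
      rw [EReal.tendsto_nhds_top_iff_real]
      intro x
      refine eventually_atTop.2 ⟨⌈x⌉₊ + 1, fun n hn => ?_⟩
      have : x < (n : ℝ) := lt_of_le_of_lt (Nat.le_ceil x)
        (by exact_mod_cast Nat.lt_of_succ_le hn)
      exact_mod_cast lt_of_lt_of_le this (le_max_right M (n : ℝ))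
    · simp only [hU, h, if_false, hStoReal h]
      exact tendsto_const_nhds
  set h' : ℕ → (ℕ → X) → EReal := fun n ω =>
    if c 0 ≤ n then (g (φ n) ω ⊓ ((U n : ℝ) : EReal)) ⊔ ((M : ℝ) : EReal)
    else ((M : ℝ) : EReal) with hh'
  have hbd : ∀ n ω, ((M : ℝ) : EReal) ≤ h' n ω ∧ h' n ω ≤ ((U n : ℝ) : EReal) := by
    intro n ω
    by_cases h : c 0 ≤ n
    · simp only [hh', h, if_true]
      exact ⟨le_sup_right, sup_le (inf_le_right) (by exact_mod_cast hMU n)⟩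
    · simp only [hh', h, if_false]
      exact ⟨le_refl _, by exact_mod_cast hMU n⟩
  have hnetop : ∀ n ω, h' n ω ≠ ⊤ := fun n ω =>
    ne_top_of_le_ne_top (EReal.coe_ne_top _) (hbd n ω).2
  have hnebot : ∀ n ω, h' n ω ≠ ⊥ := fun n ω =>
    ne_bot_of_le_ne_bot (EReal.coe_ne_bot M) (hbd n ω).1
  refine ⟨fun n ω => (h' n ω).toReal, ?_, ?_, ?_, ?_, ?_⟩
  case _ =>
    intro n ω ω' hs
    by_cases h : c 0 ≤ n
    · have hmeas : NMeas n (g (φ n)) :=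
        nmeas_mono' (le_trans (hmc (φ n)) (hφ1 n h)) (hm (φ n))
      simp only [hh', h, if_true, hmeas ω ω' hs]
    · simp only [hh', h, if_false]
  case _ =>
    intro n
    refine ⟨max |M| |U n|, fun ω => abs_le.2 ⟨?_, ?_⟩⟩
    · have : M ≤ (h' n ω).toReal := by
        have := (hbd n ω).1
        rw [← EReal.coe_toReal (hnetop n ω) (hnebot n ω)] at this
        exact_mod_cast this
      linarith [neg_abs_le M, le_max_left |M| |U n|]
    · have : (h' n ω).toReal ≤ U n := by
        have := (hbd n ω).2
        rw [← EReal.coe_toReal (hnetop n ω) (hnebot n ω)] at this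
        exact_mod_cast this
      calc (h' n ω).toReal ≤ U n := this
        _ ≤ |U n| := le_abs_self _
        _ ≤ max |M| |U n| := le_max_right _ _
  case _ =>
    intro n ω
    have := (hbd n ω).1
    rw [← EReal.coe_toReal (hnetop n ω) (hnebot n ω)] at this
    exact_mod_cast this
  case _ =>
    intro n ω
    rw [EReal.coe_toReal (hnetop n ω) (hnebot n ω)]
    exact (hbd n ω).2.trans (hUS n)
  case _ =>
    intro ω
    have hcongr : (fun n => (((h' n ω).toReal : ℝ) : EReal)) = fun n => h' n ω :=
      funext fun n => EReal.coe_toReal (hnetop n ω) (hnebot n ω)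
    rw [hcongr]
    have T1 : Tendsto (fun n => g (φ n) ω) atTop (𝓝 (f ω)) := (hgt ω).comp hφtop
    have T2 : Tendsto (fun n => (g (φ n) ω ⊓ ((U n : ℝ) : EReal)) ⊔ ((M : ℝ) : EReal))
        atTop (𝓝 (((f ω ⊓ S) ⊔ ((M : ℝ) : EReal)))) :=
      (T1.min hUt).max tendsto_const_nhds
    have heq : (f ω ⊓ S) ⊔ ((M : ℝ) : EReal) = f ω := by
      rw [inf_eq_left.mpr (le_iSup f ω), sup_eq_left.mpr (hM ω)]
    rw [heq] at T2
    refine T2.congr' ?_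
    filter_upwards [eventually_ge_atTop (c 0)] with n hn
    simp only [hh', hn, if_true]

theorem stmt5 {X : Type*} [Fintype X] [Nonempty X] (f : (ℕ → X) → EReal) :
    ((BddBelowF f ∧ ∃ g : ℕ → (ℕ → X) → EReal,
        (∀ n, ∃ m, NMeas m (g n)) ∧
        (∀ ω, Tendsto (fun n => g n ω) atTop (𝓝 (f ω)))) ↔
      (∃ fn : ℕ → (ℕ → X) → ℝ,
        (∀ n, NMeas n (fn n)) ∧
        (∀ n, ∃ B : ℝ, ∀ ω, |fn n ω| ≤ B) ∧
        (∃ M : ℝ, ∀ n ω, M ≤ fn n ω) ∧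
        (∀ n ω, ((fn n ω : ℝ) : EReal) ≤ ⨆ ω', f ω') ∧
        (∀ ω, Tendsto (fun n => ((fn n ω : ℝ) : EReal)) atTop (𝓝 (f ω))))) ∧
    ((BddBelowF f ∧ ∃ g : ℕ → (ℕ → X) → EReal,
        (∀ n, ∃ m, NMeas m (g n)) ∧
        (∀ ω, Tendsto (fun n => g n ω) atTop (𝓝 (f ω)))) →
      (∃ r : ℝ, (⨅ ω, f ω) = (r : EReal)) →
      (∃ fn : ℕ → (ℕ → X) → ℝ,
        (∀ n, NMeas n (fn n)) ∧
        (∀ n, ∃ B : ℝ, ∀ ω, |fn n ω| ≤ B) ∧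
        (∀ n ω, (⨅ ω', f ω') ≤ ((fn n ω : ℝ) : EReal)) ∧
        (∀ n ω, ((fn n ω : ℝ) : EReal) ≤ ⨆ ω', f ω') ∧
        (∀ ω, Tendsto (fun n => ((fn n ω : ℝ) : EReal)) atTop (𝓝 (f ω))))) := by
  constructor
  · constructor
    · rintro ⟨⟨M, hM⟩, g, hgm, hgt⟩
      obtain ⟨fn, h1, h2, h3, h4, h5⟩ := key' f M hM g hgm hgt
      exact ⟨fn, h1, h2, ⟨M, h3⟩, h4, h5⟩
    · rintro ⟨fn, h1, h2, ⟨M, h3⟩, h4, h5⟩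
      refine ⟨⟨M, fun ω => ge_of_tendsto' (h5 ω) fun n => ?_⟩,
        fun n ω => ((fn n ω : ℝ) : EReal), fun n => ⟨n, fun ω ω' h => ?_⟩, h5⟩
      · exact_mod_cast h3 n ω
      · simp only [h1 n ω ω' h]
  · rintro ⟨⟨M, hM⟩, g, hgm, hgt⟩ ⟨r, hr⟩
    have hrM : ∀ ω, ((r : ℝ) : EReal) ≤ f ω := fun ω => hr ▸ iInf_le f ω
    obtain ⟨fn, h1, h2, h3, h4, h5⟩ := key' f r hrM g hgm hgt
    refine ⟨fn, h1, h2, fun n ω => ?_, h4, h5⟩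
    rw [hr]
    exact_mod_cast h3 n ω
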